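/- Let L > 0, α > 0, R > 0 and ξ > 0 be real numbers. Then ∫_0^R (2r/R²) · ( ∫_{(r/R)^α ξ}^∞ ( h / (R^α h − r^α ξ) )^{1/3} · h^{L−1} e^{−h} / Γ(L) dh ) dr ≤ (2 B(2/3, 2/α) / (α R^{α/3} Γ(L))) · ( ξ^{−2/α} γ(L + 2/α, ξ) + Γ(L, ξ) ), where B(a, b) = ∫_0^1 t^{a−1}(1−t)^{b−1} dt is the Beta function, γ(s, x) = ∫_0^x t^{s−1}e^{−t} dt the lower incomplete Gamma function, and Γ(s, x) = ∫_x^∞ t^{s−1}e^{−t} dt the upper incomplete Gamma function. -/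

import Mathlib

open Real MeasureTheory

/-- The real Beta function `B(a, b) = ∫_0^1 t^{a−1}(1−t)^{b−1} dt`. -/
noncomputable def betaFun (a b : ℝ) : ℝ :=
  ∫ t in (0:ℝ)..1, t ^ (a - 1) * (1 - t) ^ (b - 1)

/-- The lower incomplete Gamma function `γ(s, x) = ∫_0^x t^{s−1} e^{−t} dt`. -/
noncomputable def lowerIncompleteGamma (s x : ℝ) : ℝ :=
  ∫ t in (0:ℝ)..x, t ^ (s - 1) * Real.exp (-t)

/-- The upper incomplete Gamma function `Γ(s, x) = ∫_x^∞ t^{s−1} e^{−t} dt`. -/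
noncomputable def upperIncompleteGamma (s x : ℝ) : ℝ :=
  ∫ t in Set.Ioi x, t ^ (s - 1) * Real.exp (-t)

/-- The symmetric-form beta integrand `t^{2/α−1} (1−t)^{−1/3}` is interval integrable on `[0,1]`. -/
private lemma betaAux_integrable {α : ℝ} (hα : 0 < α) :
    IntervalIntegrable (fun t : ℝ => t ^ (2 / α - 1) * (1 - t) ^ (-(1 / 3) : ℝ))
      volume 0 1 := by
  have h1 : IntervalIntegrable (fun t : ℝ => t ^ (2 / α - 1) * (1 - t) ^ (-(1 / 3) : ℝ))
      volume 0 (1 / 2) := by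
    apply IntervalIntegrable.mul_continuousOn
    · apply intervalIntegral.intervalIntegrable_rpow'
      have h0 : 0 < 2 / α := by positivity
      linarith
    · apply ContinuousOn.rpow_const
      · exact (continuous_const.sub continuous_id).continuousOn
      · intro x hx
        rw [Set.uIcc_of_le (by norm_num)] at hx
        exact Or.inl (ne_of_gt (by simp only [id_eq]; linarith [hx.2] : (0:ℝ) < 1 - id x))
  have h2 : IntervalIntegrable (fun t : ℝ => t ^ (2 / α - 1) * (1 - t) ^ (-(1 / 3) : ℝ))
      volume (1 / 2) 1 := by
    apply IntervalIntegrable.continuousOn_mul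
    · have h0 : IntervalIntegrable (fun x : ℝ => x ^ (-(1 / 3) : ℝ)) volume (1 / 2) 0 :=
        intervalIntegral.intervalIntegrable_rpow' (by norm_num)
      have := h0.comp_sub_left 1
      norm_num at this
      exact this
    · apply ContinuousOn.rpow_const continuous_id.continuousOn
      intro x hx
      rw [Set.uIcc_of_le (by norm_num)] at hx
      exact Or.inl (ne_of_gt (by simp only [id_eq]; linarith [hx.1] : (0:ℝ) < id x))
  exact h1.trans h2

/-- Symmetry of the beta function. -/
private lemma betaFun_symm {α : ℝ} :
    betaFun (2 / 3) (2 / α)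
      = ∫ t in (0:ℝ)..1, t ^ (2 / α - 1) * (1 - t) ^ (-(1 / 3) : ℝ) := by
  have h := intervalIntegral.integral_comp_sub_left (a := (0 : ℝ)) (b := 1)
      (fun t : ℝ => t ^ ((2 : ℝ) / 3 - 1) * (1 - t) ^ (2 / α - 1)) 1
  norm_num at h
  rw [betaFun, show ((2:ℝ)/3 - 1) = -(1/3) from by norm_num, ← h]
  apply intervalIntegral.integral_congr
  intro x _
  exact mul_comm _ _

/-- Value and integrability of the scaled beta-type integral
`∫_0^ρ (2r/ρ²) (1−(r/ρ)^α)^{−1/3} dr = (2/α) ∫_0^1 t^{2/α−1}(1−t)^{−1/3} dt`. -/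
private lemma scale_beta {α : ℝ} (hα : 0 < α) {ρ : ℝ} (hρ : 0 < ρ) :
    IntegrableOn (fun r : ℝ => 2 * r / ρ ^ 2 * (1 - (r / ρ) ^ α) ^ (-(1 / 3) : ℝ))
        (Set.Ioo 0 ρ) volume ∧
      (∫ r in Set.Ioo 0 ρ, 2 * r / ρ ^ 2 * (1 - (r / ρ) ^ α) ^ (-(1 / 3) : ℝ))
        = 2 / α * ∫ t in (0:ℝ)..1, t ^ (2 / α - 1) * (1 - t) ^ (-(1 / 3) : ℝ) := by
  set g : ℝ → ℝ := fun r => 2 * r / ρ ^ 2 * (1 - (r / ρ) ^ α) ^ (-(1 / 3) : ℝ) with hg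
  set φ : ℝ → ℝ := fun t => ρ * t ^ (α⁻¹ : ℝ) with hφ
  set φ' : ℝ → ℝ := fun t => ρ * (α⁻¹ * t ^ (α⁻¹ - 1)) with hφ'
  have hder : ∀ t ∈ Set.Ioo (0:ℝ) 1, HasDerivWithinAt φ (φ' t) (Set.Ioo 0 1) t := fun t ht =>
    ((Real.hasDerivAt_rpow_const (Or.inl ht.1.ne')).const_mul ρ).hasDerivWithinAt
  have hinj : Set.InjOn φ (Set.Ioo 0 1) := by
    intro a ha b hb hab
    have h1 : a ^ (α⁻¹ : ℝ) = b ^ (α⁻¹ : ℝ) := mul_left_cancel₀ hρ.ne' hab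
    have h2 := congrArg (fun x : ℝ => x ^ α) h1
    simpa [Real.rpow_inv_rpow ha.1.le hα.ne', Real.rpow_inv_rpow hb.1.le hα.ne'] using h2
  have himg : φ '' Set.Ioo 0 1 = Set.Ioo 0 ρ := by
    ext y
    constructor
    · rintro ⟨t, ht, rfl⟩
      refine ⟨mul_pos hρ (Real.rpow_pos_of_pos ht.1 _), ?_⟩
      have h1 : t ^ (α⁻¹ : ℝ) < 1 := Real.rpow_lt_one ht.1.le ht.2 (by positivity)
      calc ρ * t ^ (α⁻¹ : ℝ) < ρ * 1 := by
            exact mul_lt_mul_of_pos_left h1 hρ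
        _ = ρ := mul_one ρ
    · intro hy
      refine ⟨(y / ρ) ^ α, ⟨Real.rpow_pos_of_pos (div_pos hy.1 hρ) _,
        Real.rpow_lt_one (div_pos hy.1 hρ).le ((div_lt_one hρ).2 hy.2) hα⟩, ?_⟩
      show ρ * ((y / ρ) ^ α) ^ (α⁻¹ : ℝ) = y
      rw [Real.rpow_rpow_inv (div_pos hy.1 hρ).le hα.ne']
      field_simp
  have hE : ∀ t ∈ Set.Ioo (0:ℝ) 1,
      |φ' t| • g (φ t) = 2 / α * (t ^ (2 / α - 1) * (1 - t) ^ (-(1 / 3) : ℝ)) := by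
    intro t ht
    have ht0 : (0:ℝ) < t := ht.1
    have hpow : (t ^ (α⁻¹ : ℝ)) ^ α = t := Real.rpow_inv_rpow ht0.le hα.ne'
    have habs : |φ' t| = ρ * (α⁻¹ * t ^ (α⁻¹ - 1)) := by
      apply abs_of_nonneg
      have h1 : (0:ℝ) ≤ t ^ (α⁻¹ - 1 : ℝ) := Real.rpow_nonneg ht0.le _
      positivity
    have hmul : t ^ (α⁻¹ - 1 : ℝ) * t ^ (α⁻¹ : ℝ) = t ^ (2 / α - 1) := by
      rw [← Real.rpow_add ht0]
      congr 1
      field_simp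
      ring
    have hdiv : ρ * t ^ (α⁻¹ : ℝ) / ρ = t ^ (α⁻¹ : ℝ) := by field_simp
    show |φ' t| * g (φ t) = _
    rw [habs, hg, hφ]
    simp only
    rw [hdiv, hpow, ← hmul]
    field_simp
  have key := integral_image_eq_integral_abs_deriv_smul measurableSet_Ioo hder hinj g
  have keyInt := integrableOn_image_iff_integrableOn_abs_deriv_smul measurableSet_Ioo hder hinj g
  rw [himg] at key keyInt
  have hbint : IntegrableOn
      (fun t : ℝ => 2 / α * (t ^ (2 / α - 1) * (1 - t) ^ (-(1 / 3) : ℝ)))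
      (Set.Ioo 0 1) volume := by
    have h1 : IntegrableOn (fun t : ℝ => t ^ (2 / α - 1) * (1 - t) ^ (-(1 / 3) : ℝ))
        (Set.Ioo 0 1) volume :=
      ((intervalIntegrable_iff_integrableOn_Ioc_of_le zero_le_one).1
        (betaAux_integrable hα)).mono_set Set.Ioo_subset_Ioc_self
    exact h1.const_mul _
  constructor
  · rw [keyInt]
    exact hbint.congr_fun (fun x hx => (hE x hx).symm) measurableSet_Ioo
  · rw [key, setIntegral_congr_fun measurableSet_Ioo hE, integral_const_mul]
    congr 1
    rw [intervalIntegral.integral_of_le zero_le_one, integral_Ioc_eq_integral_Ioo]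

/-- The Gamma-type integrand is integrable on `Ioi 0`. -/
private lemma gammaInt_integrableOn {s : ℝ} (hs : 0 < s) :
    IntegrableOn (fun h : ℝ => h ^ (s - 1) * Real.exp (-h)) (Set.Ioi 0) volume :=
  (Real.GammaIntegral_convergent hs).congr_fun (fun x _ => mul_comm _ _) measurableSet_Ioi

set_option maxHeartbeats 1600000 in
/-- The integral inequality underlying **Lemma 5** (optimal local gradient deviation):
`∫_0^R (2r/R²) ∫_{(r/R)^α ξ}^∞ (h/(R^α h − r^α ξ))^{1/3} h^{L−1} e^{−h}/Γ(L) dh dr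
  ≤ (2 B(2/3, 2/α)/(α R^{α/3} Γ(L))) (ξ^{−2/α} γ(L + 2/α, ξ) + Γ(L, ξ))`. -/
theorem local_gradient_deviation_integral_bound
    (L α R ξ : ℝ) (hL : 0 < L) (hα : 0 < α) (hR : 0 < R) (hξ : 0 < ξ) :
    (∫ r in (0:ℝ)..R, (2 * r / R ^ 2) *
        ∫ h in Set.Ioi ((r / R) ^ α * ξ),
          (h / (R ^ α * h - r ^ α * ξ)) ^ ((1 : ℝ) / 3) * (h ^ (L - 1) * Real.exp (-h))
            / Real.Gamma L) ≤
      (2 * betaFun (2 / 3) (2 / α) / (α * R ^ (α / 3) * Real.Gamma L)) *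
        (ξ ^ (-(2 / α)) * lowerIncompleteGamma (L + 2 / α) ξ + upperIncompleteGamma L ξ) := by
  have hΓ : 0 < Real.Gamma L := Real.Gamma_pos_of_pos hL
  set ψ : ℝ → ℝ := fun h => h ^ (L - 1) * Real.exp (-h) with hψ
  set C0 : ℝ := R ^ (-(α / 3)) / Real.Gamma L with hC0
  have hRa3 : (0:ℝ) < R ^ (-(α / 3)) := Real.rpow_pos_of_pos hR _
  have hC0nn : 0 ≤ C0 := by rw [hC0]; positivity
  set q : ℝ → ℝ → ℝ := fun c h => (1 - c / h) ^ (-(1 / 3) : ℝ) * ψ h with hq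
  set Bv : ℝ := ∫ t in (0:ℝ)..1, t ^ (2 / α - 1) * (1 - t) ^ (-(1 / 3) : ℝ) with hBv
  have hBveq : betaFun (2 / 3) (2 / α) = Bv := betaFun_symm
  have hBvnn : 0 ≤ Bv := by
    rw [hBv]
    apply intervalIntegral.integral_nonneg zero_le_one
    intro t ht
    exact mul_nonneg (Real.rpow_nonneg ht.1 _) (Real.rpow_nonneg (by linarith [ht.2]) _)
  set U : ℝ := upperIncompleteGamma L ξ with hU
  have hUdef : U = ∫ h in Set.Ioi ξ, ψ h := rfl
  have hUnn : 0 ≤ U := by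
    rw [hUdef]
    exact setIntegral_nonneg measurableSet_Ioi fun h hh =>
      mul_nonneg (Real.rpow_nonneg (le_of_lt (hξ.trans hh)) _) (Real.exp_pos _).le
  set lo : ℝ := lowerIncompleteGamma (L + 2 / α) ξ with hlo
  have hlonn : 0 ≤ lo := by
    rw [hlo, lowerIncompleteGamma]
    apply intervalIntegral.integral_nonneg hξ.le
    intro t ht
    exact mul_nonneg (Real.rpow_nonneg ht.1 _) (Real.exp_pos _).le
  -- the global integrand as a function on the product space
  set K : ℝ × ℝ → ℝ := fun p =>
    {p : ℝ × ℝ | (p.1 / R) ^ α * ξ < p.2}.indicator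
      (fun p => (p.2 / (R ^ α * p.2 - p.1 ^ α * ξ)) ^ ((1 : ℝ) / 3)
        * (p.2 ^ (L - 1) * Real.exp (-p.2)) / Real.Gamma L) p with hK
  have hKsetm : MeasurableSet {p : ℝ × ℝ | (p.1 / R) ^ α * ξ < p.2} := by
    apply measurableSet_lt _ measurable_snd
    exact ((measurable_fst.div_const R).pow measurable_const).mul_const ξ
  have hKm : Measurable K := by
    apply Measurable.indicator _ hKsetm
    apply Measurable.div_const
    apply Measurable.mul
    · exact (measurable_snd.div ((measurable_const.mul measurable_snd).sub
        ((measurable_fst.pow measurable_const).mul_const ξ))).pow measurable_const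
    · exact (measurable_snd.pow measurable_const).mul
        (Real.measurable_exp.comp measurable_snd.neg)
  have hKslice : ∀ r : ℝ, (fun h => K (r, h)) =
      (Set.Ioi ((r / R) ^ α * ξ)).indicator
        (fun h => (h / (R ^ α * h - r ^ α * ξ)) ^ ((1 : ℝ) / 3)
          * (h ^ (L - 1) * Real.exp (-h)) / Real.Gamma L) := by
    intro r
    funext h
    simp [hK, Set.indicator_apply, Set.mem_Ioi, Set.mem_setOf_eq]
  have hInner : ∀ r : ℝ,
      (∫ h in Set.Ioi ((r / R) ^ α * ξ),
        (h / (R ^ α * h - r ^ α * ξ)) ^ ((1 : ℝ) / 3) * (h ^ (L - 1) * Real.exp (-h))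
          / Real.Gamma L) = ∫ h, K (r, h) := by
    intro r
    rw [hKslice r, integral_indicator measurableSet_Ioi]
  set G : ℝ → ℝ := fun r => 2 * r / R ^ 2 * ∫ h, K (r, h) with hG
  -- nonnegativity of K in the relevant range
  have hKnn : ∀ r : ℝ, 0 < r → ∀ h : ℝ, 0 ≤ K (r, h) := by
    intro r hr0 h
    simp only [hK]
    by_cases hmem : ((r, h) : ℝ × ℝ) ∈ {p : ℝ × ℝ | (p.1 / R) ^ α * ξ < p.2}
    · rw [Set.indicator_of_mem hmem]
      simp only [Set.mem_setOf_eq] at hmem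
      have htpos : 0 < (r / R) ^ α := Real.rpow_pos_of_pos (div_pos hr0 hR) α
      have hh0 : 0 < h := lt_trans (mul_pos htpos hξ) hmem
      have hden : 0 < R ^ α * h - r ^ α * ξ := by
        have hra : r ^ α = (r / R) ^ α * R ^ α := by
          rw [Real.div_rpow hr0.le hR.le]
          field_simp
        have hRα : (0:ℝ) < R ^ α := Real.rpow_pos_of_pos hR _
        have : R ^ α * h - r ^ α * ξ = R ^ α * (h - (r / R) ^ α * ξ) := by
          rw [hra]; ring
        rw [this]
        apply mul_pos hRα
        linarith
      exact div_nonneg (mul_nonneg (Real.rpow_nonneg (div_nonneg hh0.le hden.le) _)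
        (mul_nonneg (Real.rpow_nonneg hh0.le _) (Real.exp_pos _).le)) hΓ.le
    · rw [Set.indicator_of_notMem hmem]
  have hGmeas : AEStronglyMeasurable G (volume.restrict (Set.Ioo 0 R)) := by
    apply AEStronglyMeasurable.mul
    · exact ((measurable_id.const_mul 2).div_const (R ^ 2)).aestronglyMeasurable
    · exact (hKm.stronglyMeasurable.integral_prod_right').aestronglyMeasurable
  have hGnn : 0 ≤ᵐ[volume.restrict (Set.Ioo 0 R)] G := by
    apply (ae_restrict_iff' measurableSet_Ioo).2
    apply ae_of_all
    intro r hr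
    have h1 : 0 ≤ ∫ h, K (r, h) := integral_nonneg (hKnn r hr.1)
    have h2 : (0:ℝ) ≤ 2 * r / R ^ 2 := by
      have := hr.1
      positivity
    simp only [hG]
    exact mul_nonneg h2 h1
  have hLHS : (∫ r in (0:ℝ)..R, 2 * r / R ^ 2 *
      ∫ h in Set.Ioi ((r / R) ^ α * ξ),
        (h / (R ^ α * h - r ^ α * ξ)) ^ ((1 : ℝ) / 3) * (h ^ (L - 1) * Real.exp (-h))
          / Real.Gamma L) = ∫ r in Set.Ioo 0 R, G r := by
    rw [intervalIntegral.integral_of_le hR.le, integral_Ioc_eq_integral_Ioo]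
    apply setIntegral_congr_fun measurableSet_Ioo
    intro r _
    simp only [hG]
    rw [hInner r]
  -- the product-space set and ENNReal-valued integrand for the Fubini argument
  set S : Set (ℝ × ℝ) :=
    {p : ℝ × ℝ | (0 < p.1 ∧ p.1 < R) ∧ ((p.1 / R) ^ α * ξ < p.2 ∧ p.2 ≤ ξ)} with hS
  have hSm : MeasurableSet S := by
    rw [hS]
    simp only [Set.setOf_and]
    exact ((measurableSet_lt measurable_const measurable_fst).inter
      (measurableSet_lt measurable_fst measurable_const)).inter
      (hKsetm.inter (measurableSet_le measurable_snd measurable_const))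
  set F : ℝ × ℝ → ENNReal := fun p =>
    S.indicator (fun p => ENNReal.ofReal
      (2 * p.1 / R ^ 2 * C0 * q ((p.1 / R) ^ α * ξ) p.2)) p with hF
  have hFm : Measurable F := by
    apply Measurable.indicator _ hSm
    apply Measurable.ennreal_ofReal
    simp only [hq, hψ]
    have m0 : Measurable fun p : ℝ × ℝ => (p.1 / R) ^ α * ξ :=
      ((measurable_fst.div_const R).pow measurable_const).mul_const ξ
    have m1 : Measurable fun p : ℝ × ℝ => (1 - (p.1 / R) ^ α * ξ / p.2) ^ (-(1 / 3) : ℝ) :=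
      (measurable_const.sub (m0.div measurable_snd)).pow measurable_const
    have m2 : Measurable fun p : ℝ × ℝ => p.2 ^ (L - 1) * Real.exp (-p.2) :=
      (measurable_snd.pow measurable_const).mul (Real.measurable_exp.comp measurable_snd.neg)
    exact (((measurable_fst.const_mul 2).div_const (R ^ 2)).mul_const C0).mul (m1.mul m2)
  have hFmr : Measurable fun r : ℝ => ∫⁻ h, F (r, h) := hFm.lintegral_prod_right'
  -- the pointwise bound for `r ∈ (0, R)`
  have hptw : ∀ r ∈ Set.Ioo (0:ℝ) R,
      ENNReal.ofReal (G r) ≤ (∫⁻ h, F (r, h))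
        + ENNReal.ofReal (C0 * U * (2 * r / R ^ 2 * (1 - (r / R) ^ α) ^ (-(1 / 3) : ℝ))) := by
    intro r hr
    obtain ⟨hr0, hrR⟩ := hr
    have htpos : 0 < (r / R) ^ α := Real.rpow_pos_of_pos (div_pos hr0 hR) α
    have ht1 : (r / R) ^ α < 1 :=
      Real.rpow_lt_one (div_pos hr0 hR).le ((div_lt_one hR).2 hrR) hα
    have hcpos : 0 < (r / R) ^ α * ξ := mul_pos htpos hξ
    have hcξ : (r / R) ^ α * ξ < ξ := by nlinarith
    have hA : (0:ℝ) ≤ 2 * r / R ^ 2 * C0 :=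
      mul_nonneg (by positivity) hC0nn
    -- rewrite the integrand of the inner integral
    have hphi : Set.EqOn
        (fun h => (h / (R ^ α * h - r ^ α * ξ)) ^ ((1 : ℝ) / 3)
          * (h ^ (L - 1) * Real.exp (-h)) / Real.Gamma L)
        (fun h => C0 * q ((r / R) ^ α * ξ) h) (Set.Ioi ((r / R) ^ α * ξ)) := by
      intro h hh
      simp only [Set.mem_Ioi] at hh
      have hh0 : 0 < h := lt_trans hcpos hh
      have hRα : (0:ℝ) < R ^ α := Real.rpow_pos_of_pos hR _
      have hra : r ^ α = (r / R) ^ α * R ^ α := by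
        rw [Real.div_rpow hr0.le hR.le]
        field_simp
      have hd : 0 < h - (r / R) ^ α * ξ := sub_pos.2 hh
      have hden : R ^ α * h - r ^ α * ξ = R ^ α * (h - (r / R) ^ α * ξ) := by
        rw [hra]; ring
      have hsplit : h / (R ^ α * h - r ^ α * ξ)
          = (R ^ α)⁻¹ * (h / (h - (r / R) ^ α * ξ)) := by
        rw [hden]
        field_simp
      have hb : (0:ℝ) ≤ 1 - (r / R) ^ α * ξ / h := by
        have : (r / R) ^ α * ξ / h < 1 := (div_lt_one hh0).2 hh
        linarith
      have hfrac : h / (h - (r / R) ^ α * ξ) = (1 - (r / R) ^ α * ξ / h)⁻¹ := by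
        rw [one_sub_div hh0.ne', inv_div]
      simp only
      rw [hsplit, hfrac, Real.mul_rpow (by positivity) (inv_nonneg.2 hb)]
      rw [← Real.rpow_neg hR.le α, ← Real.rpow_mul hR.le,
        show (-α) * ((1:ℝ)/3) = -(α/3) by ring]
      rw [Real.inv_rpow hb, ← Real.rpow_neg hb]
      simp only [hq, hψ, hC0]
      ring
    have hG1 : G r = 2 * r / R ^ 2 * C0
        * ∫ h in Set.Ioi ((r / R) ^ α * ξ), q ((r / R) ^ α * ξ) h := by
      simp only [hG]
      rw [← hInner r, setIntegral_congr_fun measurableSet_Ioi hphi, integral_const_mul]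
      ring
    have hqnn : ∀ h ∈ Set.Ioi ((r / R) ^ α * ξ), 0 ≤ q ((r / R) ^ α * ξ) h := by
      intro h hh
      simp only [Set.mem_Ioi] at hh
      have hh0 : 0 < h := lt_trans hcpos hh
      have hb : (0:ℝ) ≤ 1 - (r / R) ^ α * ξ / h := by
        have : (r / R) ^ α * ξ / h < 1 := (div_lt_one hh0).2 hh
        linarith
      simp only [hq, hψ]
      exact mul_nonneg (Real.rpow_nonneg hb _)
        (mul_nonneg (Real.rpow_nonneg hh0.le _) (Real.exp_pos _).le)
    have step2 : ENNReal.ofReal (∫ h in Set.Ioi ((r / R) ^ α * ξ), q ((r / R) ^ α * ξ) h)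
        ≤ ∫⁻ h in Set.Ioi ((r / R) ^ α * ξ), ENNReal.ofReal (q ((r / R) ^ α * ξ) h) := by
      by_cases hint : IntegrableOn (q ((r / R) ^ α * ξ)) (Set.Ioi ((r / R) ^ α * ξ)) volume
      · exact le_of_eq (ofReal_integral_eq_lintegral_ofReal hint
          ((ae_restrict_iff' measurableSet_Ioi).2 (ae_of_all _ hqnn)))
      · rw [integral_undef hint]
        simp
    have hsplitIoi : (∫⁻ h in Set.Ioi ((r / R) ^ α * ξ), ENNReal.ofReal (q ((r / R) ^ α * ξ) h))
        = (∫⁻ h in Set.Ioc ((r / R) ^ α * ξ) ξ, ENNReal.ofReal (q ((r / R) ^ α * ξ) h))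
          + ∫⁻ h in Set.Ioi ξ, ENNReal.ofReal (q ((r / R) ^ α * ξ) h) := by
      rw [← Set.Ioc_union_Ioi_eq_Ioi hcξ.le,
        lintegral_union measurableSet_Ioi Set.Ioc_disjoint_Ioi_same]
    have hioi : (∫⁻ h in Set.Ioi ξ, ENNReal.ofReal (q ((r / R) ^ α * ξ) h))
        ≤ ENNReal.ofReal ((1 - (r / R) ^ α) ^ (-(1 / 3) : ℝ) * U) := by
      have hUint : IntegrableOn
          (fun h : ℝ => (1 - (r / R) ^ α) ^ (-(1 / 3) : ℝ) * ψ h) (Set.Ioi ξ) volume := by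
        have h1 := (gammaInt_integrableOn hL).mono_set (Set.Ioi_subset_Ioi hξ.le)
        exact h1.const_mul _
      have hb : ∀ h ∈ Set.Ioi ξ, ENNReal.ofReal (q ((r / R) ^ α * ξ) h)
          ≤ ENNReal.ofReal ((1 - (r / R) ^ α) ^ (-(1 / 3) : ℝ) * ψ h) := by
        intro h hh
        simp only [Set.mem_Ioi] at hh
        have hh0 : 0 < h := hξ.trans hh
        apply ENNReal.ofReal_le_ofReal
        simp only [hq]
        apply mul_le_mul_of_nonneg_right _
          (mul_nonneg (Real.rpow_nonneg hh0.le _) (Real.exp_pos _).le)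
        have hch : (r / R) ^ α * ξ / h ≤ (r / R) ^ α := by
          rw [mul_div_assoc]
          exact mul_le_of_le_one_right htpos.le ((div_le_one hh0).2 hh.le)
        have h1 : 1 - (r / R) ^ α ≤ 1 - (r / R) ^ α * ξ / h := by linarith
        exact Real.rpow_le_rpow_of_nonpos (by linarith) h1 (by norm_num)
      calc (∫⁻ h in Set.Ioi ξ, ENNReal.ofReal (q ((r / R) ^ α * ξ) h))
          ≤ ∫⁻ h in Set.Ioi ξ, ENNReal.ofReal ((1 - (r / R) ^ α) ^ (-(1 / 3) : ℝ) * ψ h) :=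
            setLIntegral_mono' measurableSet_Ioi hb
        _ = ENNReal.ofReal (∫ h in Set.Ioi ξ, (1 - (r / R) ^ α) ^ (-(1 / 3) : ℝ) * ψ h) := by
            rw [ofReal_integral_eq_lintegral_ofReal hUint]
            apply (ae_restrict_iff' measurableSet_Ioi).2
            apply ae_of_all
            intro h hh
            simp only [Set.mem_Ioi] at hh
            have hh0 : 0 < h := hξ.trans hh
            exact mul_nonneg (Real.rpow_nonneg (by linarith) _)
              (mul_nonneg (Real.rpow_nonneg hh0.le _) (Real.exp_pos _).le)
        _ = ENNReal.ofReal ((1 - (r / R) ^ α) ^ (-(1 / 3) : ℝ) * U) := by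
            rw [integral_const_mul, hUdef]
    have hFslice : (fun h => F (r, h)) = (Set.Ioc ((r / R) ^ α * ξ) ξ).indicator
        (fun h => ENNReal.ofReal (2 * r / R ^ 2 * C0 * q ((r / R) ^ α * ξ) h)) := by
      funext h
      simp only [hF]
      have hmemS : ((r, h) ∈ S) ↔ ((0 < r ∧ r < R) ∧ ((r / R) ^ α * ξ < h ∧ h ≤ ξ)) := by
        rw [hS]; exact Iff.rfl
      by_cases hm2 : (r / R) ^ α * ξ < h ∧ h ≤ ξ
      · rw [Set.indicator_of_mem (hmemS.2 ⟨⟨hr0, hrR⟩, hm2⟩),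
          Set.indicator_of_mem (Set.mem_Ioc.2 hm2)]
      · rw [Set.indicator_of_notMem (fun hc => hm2 (hmemS.1 hc).2),
          Set.indicator_of_notMem (fun hc => hm2 (Set.mem_Ioc.1 hc))]
    have hioc : (∫⁻ h, F (r, h)) = ENNReal.ofReal (2 * r / R ^ 2 * C0)
        * ∫⁻ h in Set.Ioc ((r / R) ^ α * ξ) ξ, ENNReal.ofReal (q ((r / R) ^ α * ξ) h) := by
      rw [show (fun h => F (r, h)) = _ from hFslice, lintegral_indicator measurableSet_Ioc,
        ← lintegral_const_mul' _ _ ENNReal.ofReal_ne_top]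
      exact lintegral_congr fun h => ENNReal.ofReal_mul hA
    calc ENNReal.ofReal (G r)
        = ENNReal.ofReal (2 * r / R ^ 2 * C0)
          * ENNReal.ofReal (∫ h in Set.Ioi ((r / R) ^ α * ξ), q ((r / R) ^ α * ξ) h) := by
          rw [hG1, ENNReal.ofReal_mul hA]
      _ ≤ ENNReal.ofReal (2 * r / R ^ 2 * C0) *
          ((∫⁻ h in Set.Ioc ((r / R) ^ α * ξ) ξ, ENNReal.ofReal (q ((r / R) ^ α * ξ) h))
            + ∫⁻ h in Set.Ioi ξ, ENNReal.ofReal (q ((r / R) ^ α * ξ) h)) :=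
          mul_le_mul_right (step2.trans (le_of_eq hsplitIoi)) _
      _ = (∫⁻ h, F (r, h)) + ENNReal.ofReal (2 * r / R ^ 2 * C0)
          * ∫⁻ h in Set.Ioi ξ, ENNReal.ofReal (q ((r / R) ^ α * ξ) h) := by
          rw [mul_add, ← hioc]
      _ ≤ (∫⁻ h, F (r, h))
          + ENNReal.ofReal (C0 * U * (2 * r / R ^ 2 * (1 - (r / R) ^ α) ^ (-(1 / 3) : ℝ))) := by
          apply add_le_add_right
          calc ENNReal.ofReal (2 * r / R ^ 2 * C0)
              * ∫⁻ h in Set.Ioi ξ, ENNReal.ofReal (q ((r / R) ^ α * ξ) h)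
              ≤ ENNReal.ofReal (2 * r / R ^ 2 * C0)
                * ENNReal.ofReal ((1 - (r / R) ^ α) ^ (-(1 / 3) : ℝ) * U) :=
              mul_le_mul_right hioi _
            _ = _ := by
              rw [← ENNReal.ofReal_mul hA]
              congr 1
              ring
  -- integrate the pointwise bound
  have hbound : (∫⁻ r in Set.Ioo 0 R, ENNReal.ofReal (G r))
      ≤ (∫⁻ r in Set.Ioo 0 R, ∫⁻ h, F (r, h))
        + ∫⁻ r in Set.Ioo 0 R,
            ENNReal.ofReal (C0 * U * (2 * r / R ^ 2 * (1 - (r / R) ^ α) ^ (-(1 / 3) : ℝ))) := by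
    refine le_trans (setLIntegral_mono' measurableSet_Ioo hptw) (le_of_eq ?_)
    exact lintegral_add_left hFmr _
  -- evaluate the second (tail) term
  have hT2 : (∫⁻ r in Set.Ioo 0 R,
        ENNReal.ofReal (C0 * U * (2 * r / R ^ 2 * (1 - (r / R) ^ α) ^ (-(1 / 3) : ℝ))))
      = ENNReal.ofReal (C0 * U * (2 / α * Bv)) := by
    obtain ⟨hIR, hVR⟩ := scale_beta hα hR
    have hnn2 : 0 ≤ᵐ[volume.restrict (Set.Ioo 0 R)]
        fun r => C0 * U * (2 * r / R ^ 2 * (1 - (r / R) ^ α) ^ (-(1 / 3) : ℝ)) := by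
      apply (ae_restrict_iff' measurableSet_Ioo).2
      apply ae_of_all
      intro r hr
      have h1 : (0:ℝ) ≤ 1 - (r / R) ^ α := by
        have := Real.rpow_le_one (div_nonneg hr.1.le hR.le) ((div_le_one hR).2 hr.2.le) hα.le
        linarith
      have hr0 := hr.1
      exact mul_nonneg (mul_nonneg hC0nn hUnn)
        (mul_nonneg (by positivity) (Real.rpow_nonneg h1 _))
    rw [← ofReal_integral_eq_lintegral_ofReal (hIR.const_mul (C0 * U)) hnn2,
      integral_const_mul, hVR, ← hBv]
  -- Tonelli: swap the order of integration
  have hswap : (∫⁻ r in Set.Ioo 0 R, ∫⁻ h, F (r, h)) ≤ ∫⁻ h, ∫⁻ r, F (r, h) := by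
    refine le_trans (setLIntegral_le_lintegral _ _) (le_of_eq ?_)
    exact lintegral_lintegral_swap (by exact hFm.aemeasurable)
  -- evaluate the inner integral over `r` for fixed `h`
  have hDh : ∀ h : ℝ, (∫⁻ r, F (r, h)) = (Set.Ioc 0 ξ).indicator
      (fun h => ENNReal.ofReal (C0 * (2 / α * Bv) * ((h / ξ) ^ ((2:ℝ) / α) * ψ h))) h := by
    intro h
    by_cases hh : h ∈ Set.Ioc 0 ξ
    · obtain ⟨hh0, hhξ⟩ := hh
      have hx0 : (0:ℝ) < h / ξ := div_pos hh0 hξ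
      set ρ : ℝ := R * (h / ξ) ^ (α⁻¹ : ℝ) with hρdef
      have hρ0 : 0 < ρ := mul_pos hR (Real.rpow_pos_of_pos hx0 _)
      have hρR : ρ ≤ R := by
        have h1 : (h / ξ) ^ (α⁻¹ : ℝ) ≤ 1 :=
          Real.rpow_le_one hx0.le ((div_le_one hξ).2 hhξ) (by positivity)
        calc ρ = R * (h / ξ) ^ (α⁻¹ : ℝ) := hρdef
          _ ≤ R * 1 := by
            apply mul_le_mul_of_nonneg_left h1 hR.le
          _ = R := mul_one R
      have hρα : ρ ^ α = R ^ α * (h / ξ) := by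
        rw [hρdef, Real.mul_rpow hR.le (Real.rpow_nonneg hx0.le _),
          Real.rpow_inv_rpow hx0.le hα.ne']
      have hslice : (fun r => F (r, h)) = (Set.Ioo 0 ρ).indicator
          (fun r => ENNReal.ofReal (C0 * ψ h
            * (2 * r / ρ ^ 2 * (1 - (r / ρ) ^ α) ^ (-(1 / 3) : ℝ)) * (ρ ^ 2 / R ^ 2))) := by
        funext r
        simp only [hF]
        have hmemS : ((r, h) ∈ S) ↔ ((0 < r ∧ r < R) ∧ ((r / R) ^ α * ξ < h ∧ h ≤ ξ)) := by
          rw [hS]; exact Iff.rfl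
        by_cases hrm : r ∈ Set.Ioo 0 ρ
        · obtain ⟨hr0, hrρ⟩ := hrm
          have hrR : r < R := lt_of_lt_of_le hrρ hρR
          have hcond : (r / R) ^ α * ξ < h := by
            have h1 : r / R < (h / ξ) ^ (α⁻¹ : ℝ) := by
              rw [div_lt_iff₀ hR, mul_comm]
              exact hrρ
            have h2 : (r / R) ^ α < h / ξ := by
              calc (r / R) ^ α < ((h / ξ) ^ (α⁻¹ : ℝ)) ^ α :=
                  Real.rpow_lt_rpow (div_nonneg hr0.le hR.le) h1 hα
                _ = h / ξ := Real.rpow_inv_rpow hx0.le hα.ne'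
            calc (r / R) ^ α * ξ < h / ξ * ξ := mul_lt_mul_of_pos_right h2 hξ
              _ = h := by field_simp
          rw [Set.indicator_of_mem (hmemS.2 ⟨⟨hr0, hrR⟩, hcond, hhξ⟩),
            Set.indicator_of_mem (Set.mem_Ioo.2 ⟨hr0, hrρ⟩)]
          congr 1
          have hRα : (0:ℝ) < R ^ α := Real.rpow_pos_of_pos hR _
          have hc2 : (r / R) ^ α * ξ / h = (r / ρ) ^ α := by
            rw [Real.div_rpow hr0.le hρ0.le, hρα, Real.div_rpow hr0.le hR.le]
            field_simp
          simp only [hq]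
          rw [hc2]
          field_simp
        · rw [Set.indicator_of_notMem hrm, Set.indicator_of_notMem (fun hc => ?_)]
          apply hrm
          obtain ⟨⟨hr0, hrR⟩, hch, _⟩ := hmemS.1 hc
          refine ⟨hr0, ?_⟩
          have h2 : (r / R) ^ α < h / ξ := (lt_div_iff₀ hξ).2 hch
          have h3 : r / R < (h / ξ) ^ (α⁻¹ : ℝ) := by
            calc r / R = ((r / R) ^ α) ^ (α⁻¹ : ℝ) :=
                (Real.rpow_rpow_inv (div_nonneg hr0.le hR.le) hα.ne').symm
              _ < (h / ξ) ^ (α⁻¹ : ℝ) :=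
                Real.rpow_lt_rpow (Real.rpow_nonneg (div_nonneg hr0.le hR.le) _) h2
                  (by positivity)
          rw [hρdef]
          calc r = r / R * R := by field_simp
            _ < (h / ξ) ^ (α⁻¹ : ℝ) * R := mul_lt_mul_of_pos_right h3 hR
            _ = R * (h / ξ) ^ (α⁻¹ : ℝ) := mul_comm _ _
      rw [show (fun r => F (r, h)) = _ from hslice, lintegral_indicator measurableSet_Ioo,
        Set.indicator_of_mem (Set.mem_Ioc.2 ⟨hh0, hhξ⟩)]
      obtain ⟨hIρ, hVρ⟩ := scale_beta hα hρ0
      have hψnn : (0:ℝ) ≤ ψ h := by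
        simp only [hψ]
        exact mul_nonneg (Real.rpow_nonneg hh0.le _) (Real.exp_pos _).le
      have hnn3 : 0 ≤ᵐ[volume.restrict (Set.Ioo 0 ρ)] fun r =>
          C0 * ψ h * (2 * r / ρ ^ 2 * (1 - (r / ρ) ^ α) ^ (-(1 / 3) : ℝ)) * (ρ ^ 2 / R ^ 2) := by
        apply (ae_restrict_iff' measurableSet_Ioo).2
        apply ae_of_all
        intro r hr
        have h1 : (0:ℝ) ≤ 1 - (r / ρ) ^ α := by
          have := Real.rpow_le_one (div_nonneg hr.1.le hρ0.le)
            ((div_le_one hρ0).2 hr.2.le) hα.le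
          linarith
        have hr0 := hr.1
        apply mul_nonneg
        apply mul_nonneg (mul_nonneg hC0nn hψnn)
        · exact mul_nonneg (by positivity) (Real.rpow_nonneg h1 _)
        · positivity
      rw [← ofReal_integral_eq_lintegral_ofReal
        ((hIρ.const_mul (C0 * ψ h)).mul_const (ρ ^ 2 / R ^ 2)) hnn3]
      congr 1
      have hρ2 : ρ ^ 2 / R ^ 2 = (h / ξ) ^ ((2:ℝ) / α) := by
        have h1 : ((h / ξ) ^ (α⁻¹ : ℝ)) ^ (2:ℕ) = (h / ξ) ^ ((2:ℝ) / α) := by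
          rw [← Real.rpow_natCast ((h / ξ) ^ (α⁻¹ : ℝ)) 2, ← Real.rpow_mul hx0.le]
          congr 1
          push_cast
          ring
        rw [hρdef, mul_pow, h1]
        field_simp
      rw [integral_mul_const, integral_const_mul, hVρ, ← hBv, hρ2]
      ring
    · have hz : ∀ r : ℝ, F (r, h) = 0 := by
        intro r
        simp only [hF]
        apply Set.indicator_of_notMem
        intro hmem
        have hmemS : ((r, h) ∈ S) ↔ ((0 < r ∧ r < R) ∧ ((r / R) ^ α * ξ < h ∧ h ≤ ξ)) := by
          rw [hS]; exact Iff.rfl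
        obtain ⟨⟨hr0, hrR⟩, hch, hhξ⟩ := hmemS.1 hmem
        apply hh
        have htpos : 0 < (r / R) ^ α := Real.rpow_pos_of_pos (div_pos hr0 hR) α
        exact ⟨lt_trans (mul_pos htpos hξ) hch, hhξ⟩
      rw [Set.indicator_of_notMem hh]
      simp only [hz]
      exact lintegral_zero
  -- the value of the Fubini-swapped integral
  have hIv : IntegrableOn (fun h : ℝ => C0 * (2 / α * Bv)
      * ((h / ξ) ^ ((2:ℝ) / α) * ψ h)) (Set.Ioc 0 ξ) volume := by
    have base : IntegrableOn (fun h : ℝ => h ^ (L + 2 / α - 1) * Real.exp (-h))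
        (Set.Ioc 0 ξ) volume :=
      (gammaInt_integrableOn (by positivity)).mono_set Set.Ioc_subset_Ioi_self
    apply IntegrableOn.congr_fun
      (base.const_mul (C0 * (2 / α * Bv) * ξ ^ (-(2 / α)))) ?_ measurableSet_Ioc
    intro h hh
    have e1 : (h / ξ) ^ ((2:ℝ) / α) = h ^ ((2:ℝ) / α) * ξ ^ (-(2 / α)) := by
      rw [Real.div_rpow hh.1.le hξ.le, Real.rpow_neg hξ.le]
      exact div_eq_mul_inv _ _
    have e2 : h ^ ((2:ℝ) / α) * h ^ (L - 1) = h ^ (L + 2 / α - 1) := by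
      rw [← Real.rpow_add hh.1]
      congr 1
      ring
    simp only [hψ]
    rw [e1, ← e2]
    ring
  have hnn4 : 0 ≤ᵐ[volume.restrict (Set.Ioc 0 ξ)] fun h : ℝ =>
      C0 * (2 / α * Bv) * ((h / ξ) ^ ((2:ℝ) / α) * ψ h) := by
    apply (ae_restrict_iff' measurableSet_Ioc).2
    apply ae_of_all
    intro h hh
    have hψnn : (0:ℝ) ≤ ψ h := by
      simp only [hψ]
      exact mul_nonneg (Real.rpow_nonneg hh.1.le _) (Real.exp_pos _).le
    exact mul_nonneg (mul_nonneg hC0nn (by positivity))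
      (mul_nonneg (Real.rpow_nonneg (div_nonneg hh.1.le hξ.le) _) hψnn)
  have hval : (∫ h in Set.Ioc 0 ξ, C0 * (2 / α * Bv) * ((h / ξ) ^ ((2:ℝ) / α) * ψ h))
      = C0 * (2 / α * Bv) * (ξ ^ (-(2 / α)) * lo) := by
    rw [integral_const_mul]
    congr 1
    have heq : Set.EqOn (fun h : ℝ => (h / ξ) ^ ((2:ℝ) / α) * ψ h)
        (fun h : ℝ => ξ ^ (-(2 / α)) * (h ^ (L + 2 / α - 1) * Real.exp (-h)))
        (Set.Ioc 0 ξ) := by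
      intro h hh
      have e1 : (h / ξ) ^ ((2:ℝ) / α) = h ^ ((2:ℝ) / α) * ξ ^ (-(2 / α)) := by
        rw [Real.div_rpow hh.1.le hξ.le, Real.rpow_neg hξ.le]
        exact div_eq_mul_inv _ _
      have e2 : h ^ ((2:ℝ) / α) * h ^ (L - 1) = h ^ (L + 2 / α - 1) := by
        rw [← Real.rpow_add hh.1]
        congr 1
        ring
      simp only [hψ]
      rw [e1, ← e2]
      ring
    rw [setIntegral_congr_fun measurableSet_Ioc heq, integral_const_mul]
    congr 1
    rw [hlo, lowerIncompleteGamma, intervalIntegral.integral_of_le hξ.le]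
  have hT1 : (∫⁻ h, ∫⁻ r, F (r, h))
      = ENNReal.ofReal (C0 * (2 / α * Bv) * (ξ ^ (-(2 / α)) * lo)) := by
    rw [lintegral_congr hDh, lintegral_indicator measurableSet_Ioc,
      ← ofReal_integral_eq_lintegral_ofReal hIv hnn4, hval]
  -- assemble everything
  have hX1nn : (0:ℝ) ≤ C0 * (2 / α * Bv) * (ξ ^ (-(2 / α)) * lo) :=
    mul_nonneg (mul_nonneg hC0nn (by positivity))
      (mul_nonneg (Real.rpow_nonneg hξ.le _) hlonn)
  have hX2nn : (0:ℝ) ≤ C0 * U * (2 / α * Bv) :=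
    mul_nonneg (mul_nonneg hC0nn hUnn) (by positivity)
  have hfinal : C0 * (2 / α * Bv) * (ξ ^ (-(2 / α)) * lo) + C0 * U * (2 / α * Bv)
      = 2 * Bv / (α * R ^ (α / 3) * Real.Gamma L) * (ξ ^ (-(2 / α)) * lo + U) := by
    have h1 : R ^ (-(α / 3)) = (R ^ (α / 3))⁻¹ := Real.rpow_neg hR.le _
    have h2 : (0:ℝ) < R ^ (α / 3) := Real.rpow_pos_of_pos hR _
    rw [hC0, h1]
    field_simp
  rw [hLHS, integral_eq_lintegral_of_nonneg_ae hGnn hGmeas, hBveq]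
  have hne : ENNReal.ofReal (C0 * (2 / α * Bv) * (ξ ^ (-(2 / α)) * lo))
      + ENNReal.ofReal (C0 * U * (2 / α * Bv)) ≠ ⊤ := by
    exact ENNReal.add_ne_top.2 ⟨ENNReal.ofReal_ne_top, ENNReal.ofReal_ne_top⟩
  calc (∫⁻ r in Set.Ioo 0 R, ENNReal.ofReal (G r)).toReal
      ≤ (ENNReal.ofReal (C0 * (2 / α * Bv) * (ξ ^ (-(2 / α)) * lo))
          + ENNReal.ofReal (C0 * U * (2 / α * Bv))).toReal := by
        apply ENNReal.toReal_mono hne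
        exact hbound.trans (add_le_add (hswap.trans (le_of_eq hT1)) (le_of_eq hT2))
    _ = C0 * (2 / α * Bv) * (ξ ^ (-(2 / α)) * lo) + C0 * U * (2 / α * Bv) := by
        rw [← ENNReal.ofReal_add hX1nn hX2nn, ENNReal.toReal_ofReal (by linarith)]
    _ = 2 * Bv / (α * R ^ (α / 3) * Real.Gamma L) * (ξ ^ (-(2 / α)) * lo + U) := hfinal
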